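/- Let ν ∈ (1,3), and let integers w ≥ 1 and k ≥ 1 with w = (k+1)q + b, 0 ≤ b < k+1. Then w^ν - b·(q+1)^ν - (k+1-b)·q^ν ≥ (1 - (k+1)^{1-ν})·(w^ν - w). -/

import Mathlib

open Real Set

set_option maxHeartbeats 1000000

lemma convA {p : ℝ} (hp : 1 ≤ p) :
    ConvexOn ℝ (Ici 1) (fun t : ℝ => t ^ p * (log t) ^ 2) := by
  have hint : interior (Ici (1:ℝ)) = Ioi 1 := interior_Ici
  refine convexOn_of_hasDerivWithinAt2_nonneg (convex_Ici 1) ?_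
    (f' := fun t => t ^ (p-1) * (p * (log t)^2 + 2 * log t))
    (f'' := fun t => t ^ (p-2) * ((p-1) * (p * (log t)^2 + 2 * log t) + (2 * p * log t + 2)))
    ?_ ?_ ?_
  · intro t ht
    have ht0 : (0:ℝ) < t := lt_of_lt_of_le one_pos ht
    exact ((Real.continuousAt_rpow_const t p (Or.inl ht0.ne')).mul
      ((Real.continuousAt_log ht0.ne').pow 2)).continuousWithinAt
  · intro t ht
    rw [hint] at ht
    have ht0 : (0:ℝ) < t := lt_trans one_pos ht
    have h1 : HasDerivAt (fun t : ℝ => t ^ p) (p * t ^ (p-1)) t :=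
      Real.hasDerivAt_rpow_const (Or.inl ht0.ne')
    have h2 : HasDerivAt (fun t : ℝ => (log t) ^ 2) (2 * (log t) ^ 1 * t⁻¹) t :=
      (Real.hasDerivAt_log ht0.ne').pow 2
    have h := h1.mul h2
    have key : p * t ^ (p-1) * log t ^ 2 + t ^ p * (2 * log t ^ 1 * t⁻¹)
        = t ^ (p-1) * (p * (log t)^2 + 2 * log t) := by
      rw [Real.rpow_sub_one ht0.ne']
      field_simp
    rw [key] at h
    exact h.hasDerivWithinAt
  · intro t ht
    rw [hint] at ht
    have ht0 : (0:ℝ) < t := lt_trans one_pos ht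
    have h1 : HasDerivAt (fun t : ℝ => t ^ (p-1)) ((p-1) * t ^ (p-1-1)) t :=
      Real.hasDerivAt_rpow_const (Or.inl ht0.ne')
    have h2 : HasDerivAt (fun t : ℝ => p * (log t)^2 + 2 * log t)
        (p * (2 * (log t) ^ 1 * t⁻¹) + 2 * t⁻¹) t := by
      exact (((Real.hasDerivAt_log ht0.ne').pow 2).const_mul p).add
        ((Real.hasDerivAt_log ht0.ne').const_mul 2)
    have h := h1.mul h2
    have e1 : p - 1 - 1 = p - 2 := by ring
    have key : (p-1) * t ^ (p-1-1) * (p * (log t)^2 + 2 * log t)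
        + t ^ (p-1) * (p * (2 * (log t) ^ 1 * t⁻¹) + 2 * t⁻¹)
        = t ^ (p-2) * ((p-1) * (p * (log t)^2 + 2 * log t) + (2 * p * log t + 2)) := by
      rw [e1, show p - 2 = (p-1) - 1 by ring, Real.rpow_sub_one ht0.ne' (p-1)]
      field_simp
    rw [key] at h
    exact h.hasDerivWithinAt
  · intro t ht
    rw [hint] at ht
    have ht1 : (1:ℝ) < t := ht
    have hL : 0 ≤ log t := Real.log_nonneg ht1.le
    have htp : (0:ℝ) ≤ t ^ (p-2) := Real.rpow_nonneg (by positivity) _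
    have hp1 : (0:ℝ) ≤ p - 1 := by linarith
    have : 0 ≤ (p-1) * (p * (log t)^2 + 2 * log t) + (2 * p * log t + 2) := by
      nlinarith [mul_nonneg (mul_nonneg hp1 (by linarith : (0:ℝ) ≤ p)) (sq_nonneg (log t)),
        mul_nonneg hp1 hL, mul_nonneg (by linarith : (0:ℝ) ≤ p) hL]
    positivity

lemma concG {n W B Q : ℝ} (hn : 2 ≤ n) (hQ : 1 ≤ Q) (hB0 : 0 ≤ B) (hBn : B ≤ n)
    (hW : W = n * Q + B) :
    ConcaveOn ℝ (Icc (1:ℝ) 3)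
      (fun x => n * (W/n) ^ x + W - (W*n) * (1/n) ^ x - B * (Q+1) ^ x - (n-B) * Q ^ x) := by
  have hn0 : (0:ℝ) < n := by linarith
  have hW0 : (0:ℝ) < W := by nlinarith
  have hr1 : 1 ≤ W / n := by rw [le_div_iff₀ hn0]; nlinarith
  have hr0 : (0:ℝ) < W / n := by linarith
  have hc0 : (0:ℝ) < 1 / n := by positivity
  have hs0 : (0:ℝ) < Q + 1 := by linarith
  have hQ0 : (0:ℝ) < Q := by linarith
  have hG' : ∀ x : ℝ, HasDerivAt
      (fun x => n * (W/n) ^ x + W - (W*n) * (1/n) ^ x - B * (Q+1) ^ x - (n-B) * Q ^ x)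
      (n * ((W/n) ^ x * log (W/n)) - (W*n) * ((1/n) ^ x * log (1/n))
        - B * ((Q+1) ^ x * log (Q+1)) - (n-B) * (Q ^ x * log Q)) x := by
    intro x
    exact ((((((hasStrictDerivAt_const_rpow hr0 x).hasDerivAt.const_mul n).add_const W).sub
      ((hasStrictDerivAt_const_rpow hc0 x).hasDerivAt.const_mul (W*n))).sub
      ((hasStrictDerivAt_const_rpow hs0 x).hasDerivAt.const_mul B)).sub
      ((hasStrictDerivAt_const_rpow hQ0 x).hasDerivAt.const_mul (n-B)))
  have hG'' : ∀ x : ℝ, HasDerivAt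
      (fun x => n * ((W/n) ^ x * log (W/n)) - (W*n) * ((1/n) ^ x * log (1/n))
        - B * ((Q+1) ^ x * log (Q+1)) - (n-B) * (Q ^ x * log Q))
      (n * ((W/n) ^ x * log (W/n) * log (W/n)) - (W*n) * ((1/n) ^ x * log (1/n) * log (1/n))
        - B * ((Q+1) ^ x * log (Q+1) * log (Q+1)) - (n-B) * (Q ^ x * log Q * log Q)) x := by
    intro x
    exact ((((((hasStrictDerivAt_const_rpow hr0 x).hasDerivAt.mul_const (log (W/n))).const_mul n).sub
      (((hasStrictDerivAt_const_rpow hc0 x).hasDerivAt.mul_const (log (1/n))).const_mul (W*n))).sub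
      (((hasStrictDerivAt_const_rpow hs0 x).hasDerivAt.mul_const (log (Q+1))).const_mul B)).sub
      (((hasStrictDerivAt_const_rpow hQ0 x).hasDerivAt.mul_const (log Q)).const_mul (n-B)))
  refine concaveOn_of_hasDerivWithinAt2_nonpos (convex_Icc 1 3)
    (fun x _ => (hG' x).differentiableAt.continuousAt.continuousWithinAt)
    (fun x _ => (hG' x).hasDerivWithinAt) (fun x _ => (hG'' x).hasDerivWithinAt) ?_
  intro x hx
  rw [interior_Icc] at hx
  have hx1 : (1:ℝ) ≤ x := hx.1.le
  have ha : (0:ℝ) ≤ B/n := by positivity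
  have hb2 : (0:ℝ) ≤ (n-B)/n := by apply div_nonneg; linarith; linarith
  have hab : B/n + (n-B)/n = 1 := by field_simp; ring
  have key := (convA hx1).2 (show (Q+1) ∈ Ici (1:ℝ) by simp; linarith)
    (show Q ∈ Ici (1:ℝ) from hQ) ha hb2 hab
  have hpt : (B/n) • (Q+1) + ((n-B)/n) • Q = W / n := by
    simp only [smul_eq_mul]
    field_simp
    nlinarith [hW]
  rw [hpt] at key
  have key2 : n * ((W/n) ^ x * (log (W/n))^2)
      ≤ B * ((Q+1) ^ x * (log (Q+1))^2) + (n-B) * (Q ^ x * (log Q)^2) := by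
    have := mul_le_mul_of_nonneg_left key hn0.le
    calc n * ((W/n) ^ x * (log (W/n))^2) ≤
        n * (B/n * ((Q+1) ^ x * log (Q+1) ^ 2) + (n-B)/n * (Q ^ x * log Q ^ 2)) := this
      _ = B * ((Q+1) ^ x * (log (Q+1))^2) + (n-B) * (Q ^ x * (log Q)^2) := by
          field_simp
  have hneg : 0 ≤ (W*n) * ((1/n) ^ x * log (1/n) * log (1/n)) := by
    have h1 : (0:ℝ) ≤ (1/n) ^ x := (Real.rpow_pos_of_pos hc0 x).le
    have h2 : (0:ℝ) ≤ log (1/n) * log (1/n) := mul_self_nonneg _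
    nlinarith [mul_nonneg (mul_nonneg (mul_nonneg hW0.le hn0.le) h1) h2]
  nlinarith [key2, hneg]

/-- Cooperative-steal potential decrease: for `ν ∈ (1,3)` and integers
`w ≥ 1`, `k ≥ 1` with `w = (k+1)q + b`, `0 ≤ b < k+1`,
`w^ν - b(q+1)^ν - (k+1-b)q^ν ≥ (1 - (k+1)^(1-ν))(w^ν - w)`. -/
theorem stmt_5 (ν : ℝ) (hν1 : 1 < ν) (hν3 : ν < 3) (w k q b : ℕ)
    (hw : 1 ≤ w) (hk : 1 ≤ k) (hsplit : w = (k + 1) * q + b) (hb : b < k + 1) :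
    (w : ℝ) ^ ν - (b : ℝ) * ((q : ℝ) + 1) ^ ν - ((k : ℝ) + 1 - b) * (q : ℝ) ^ ν
      ≥ (1 - ((k : ℝ) + 1) ^ (1 - ν)) * ((w : ℝ) ^ ν - (w : ℝ)) := by
  have hn2 : (2:ℝ) ≤ (k:ℝ) + 1 := by
    have : (1:ℝ) ≤ (k:ℝ) := by exact_mod_cast hk
    linarith
  set n : ℝ := (k:ℝ) + 1 with hn_def
  set W : ℝ := (w:ℝ) with hW_def
  set B : ℝ := (b:ℝ) with hB_def
  set Q : ℝ := (q:ℝ) with hQ_def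
  have hn0 : (0:ℝ) < n := by linarith
  have hW1 : (1:ℝ) ≤ W := by rw [hW_def]; exact_mod_cast hw
  have hB0 : (0:ℝ) ≤ B := Nat.cast_nonneg b
  have hBn : B ≤ n := by
    have : (b:ℝ) < (k:ℝ) + 1 := by exact_mod_cast hb
    linarith
  have hcexp : ((k:ℝ) + 1) ^ (1 - ν) ≤ 1 :=
    Real.rpow_le_one_of_one_le_of_nonpos (by linarith) (by linarith)
  have hcpos : (0:ℝ) ≤ ((k:ℝ) + 1) ^ (1 - ν) := (Real.rpow_pos_of_pos hn0 _).le
  rcases Nat.eq_zero_or_pos q with hq0 | hq1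
  · -- q = 0 case
    subst hq0
    have hQ0 : Q = 0 := by simp [hQ_def]
    rw [hQ0]
    have hWν : W ≤ W ^ ν := by
      have := Real.rpow_le_rpow_of_exponent_le hW1 (le_of_lt hν1)
      rwa [Real.rpow_one] at this
    rw [show (0:ℝ) + 1 = 1 by ring, Real.one_rpow, Real.zero_rpow (by linarith : ν ≠ 0)]
    have hwb : W = B := by
      rw [hW_def, hB_def]; exact_mod_cast congrArg (Nat.cast : ℕ → ℝ) (by simpa using hsplit)
    rw [← hwb]
    nlinarith [mul_nonneg hcpos (sub_nonneg.2 hWν)]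
  · -- q ≥ 1 case
    have hQ1 : (1:ℝ) ≤ Q := by rw [hQ_def]; exact_mod_cast hq1
    have hQ0 : (0:ℝ) < Q := by linarith
    have hW : W = n * Q + B := by rw [hW_def, hn_def, hB_def, hQ_def]; push_cast [hsplit]; ring
    have hW0 : (0:ℝ) < W := by linarith
    have hB1 : b ≠ 0 → (1:ℝ) ≤ B := fun hb1 => by
      rw [hB_def]; exact_mod_cast Nat.one_le_iff_ne_zero.2 hb1
    clear_value n W B Q
    have hG1 : n * (W/n) ^ (1:ℝ) + W - (W*n) * (1/n) ^ (1:ℝ) - B * (Q+1) ^ (1:ℝ)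
        - (n-B) * Q ^ (1:ℝ) = 0 := by
      rw [Real.rpow_one, Real.rpow_one, Real.rpow_one, Real.rpow_one]
      field_simp
      linarith [hW]
    have e3 : ∀ a : ℝ, a ^ (3:ℝ) = a ^ (3:ℕ) := fun a => by
      rw [← Real.rpow_natCast a 3]; norm_num
    have hBB : (0:ℝ) ≤ B * (B^2 - 1) := by
      rcases Nat.eq_zero_or_pos b with hb0 | hb1
      · have : B = 0 := by rw [hB_def, hb0]; norm_num
        simp [this]
      · have : (1:ℝ) ≤ B := hB1 (Nat.pos_iff_ne_zero.mp hb1)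
        nlinarith
    have hcoef : (0:ℝ) ≤ n^2 - 1 - 3*B*(n-B) := by nlinarith [sq_nonneg (n - 2*B)]
    have hkey : (0:ℝ) ≤ W^3 + (n^2-1)*W - n^2*(B*(Q+1)^3 + (n-B)*Q^3) := by
      rw [hW]
      nlinarith [mul_nonneg (mul_nonneg hn0.le hQ0.le) hcoef, hBB]
    have hG3 : (0:ℝ) ≤ n * (W/n) ^ (3:ℕ) + W - (W*n) * (1/n) ^ (3:ℕ) - B * (Q+1) ^ (3:ℕ)
        - (n-B) * Q ^ (3:ℕ) := by
      have heq : n * (W/n) ^ (3:ℕ) + W - (W*n) * (1/n) ^ (3:ℕ) - B * (Q+1) ^ (3:ℕ)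
          - (n-B) * Q ^ (3:ℕ)
          = (W^3 + (n^2-1)*W - n^2*(B*(Q+1)^3 + (n-B)*Q^3)) / n^2 := by
        field_simp
        ring
      rw [heq]
      positivity
    have hconc := concG hn2 hQ1 hB0 hBn hW
    have h1m : (1:ℝ) ∈ Icc (1:ℝ) 3 := by constructor <;> norm_num
    have h3m : (3:ℝ) ∈ Icc (1:ℝ) 3 := by constructor <;> norm_num
    have ha : (0:ℝ) ≤ (3-ν)/2 := by linarith
    have hb2 : (0:ℝ) ≤ (ν-1)/2 := by linarith
    have hab : (3-ν)/2 + (ν-1)/2 = 1 := by ring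
    have hchord := hconc.2 h1m h3m ha hb2 hab
    simp only [smul_eq_mul] at hchord
    rw [show (3-ν)/2 * 1 + (ν-1)/2 * 3 = ν by ring] at hchord
    rw [e3 (W/n), e3 (1/n), e3 (Q+1), e3 Q] at hchord
    have hz : (3-ν)/2 * (n * (W/n) ^ (1:ℝ) + W - (W*n) * (1/n) ^ (1:ℝ) - B * (Q+1) ^ (1:ℝ)
        - (n-B) * Q ^ (1:ℝ)) = 0 := by rw [hG1, mul_zero]
    have h2 : (0:ℝ) ≤ (ν-1)/2 * (n * (W/n) ^ (3:ℕ) + W - (W*n) * (1/n) ^ (3:ℕ)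
        - B * (Q+1) ^ (3:ℕ) - (n-B) * Q ^ (3:ℕ)) := mul_nonneg hb2 hG3
    have hGν : (0:ℝ) ≤ n * (W/n) ^ ν + W - (W*n) * (1/n) ^ ν - B * (Q+1) ^ ν
        - (n-B) * Q ^ ν := by linarith [hchord, hz, h2]
    have hnν : (0:ℝ) < n ^ ν := Real.rpow_pos_of_pos hn0 ν
    have hfin : W ^ ν - B * (Q+1) ^ ν - (n - B) * Q ^ ν - (1 - n ^ (1 - ν)) * (W ^ ν - W)
        = n * (W/n) ^ ν + W - (W*n) * (1/n) ^ ν - B * (Q+1) ^ ν - (n-B) * Q ^ ν := by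
      rw [Real.div_rpow hW0.le hn0.le, Real.div_rpow (by norm_num : (0:ℝ) ≤ 1) hn0.le,
        Real.one_rpow, Real.rpow_sub hn0, Real.rpow_one]
      field_simp
      ring
    rw [ge_iff_le, ← sub_nonneg, hfin]
    exact hGν
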